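/- Let a, b > 1 with log_b a = p/q, p, q coprime positive integers, β = b^p, and ψ ∈ L²((0,∞)) with Θ_β-transform matrix Ψ(x,ξ) = (a^{r/2} b^{s/2} Θ_β ψ(a^r b^s x, ξ))_{r∈{0,...,q−1}, s∈{0,...,p−1}}. Then for all (l, m) ∈ ℤ × {0,...,q−1} and a.e. (x, ξ): Ψ(a^{lq+m} x, ξ) = a^{−(lq+m)/2} e^{2πilξ} U_m(ξ) Ψ(x, ξ), where U_m(ξ) is the q×q block matrix with I_{q−m} in the top-right block and e^{2πiξ} I_m in the bottom-left block. -/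

import Mathlib

open Set MeasureTheory Complex

/-- The `Θ_β`-transform: `Θ_β f (x, ξ) = ∑_{l ∈ ℤ} β^{l/2} f(β^l x) e^{-2πilξ}`. -/
noncomputable def thetaTransform (β : ℝ) (f : ℝ → ℂ) (x ξ : ℝ) : ℂ :=
  ∑' l : ℤ, (Real.sqrt (β ^ l) : ℂ) * f (β ^ l * x) *
    Complex.exp (-(2 * Real.pi * Complex.I * (l : ℂ) * (ξ : ℂ)))

/-- The `Θ_β`-transform matrix `Ψ(x,ξ) = (a^{r/2} b^{s/2} Θ_β ψ(a^r b^s x, ξ))_{r,s}`. -/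
noncomputable def psiMatrix (a b β : ℝ) (p q : ℕ) (ψ : ℝ → ℂ) (x ξ : ℝ) :
    Matrix (Fin q) (Fin p) ℂ :=
  fun r s => (Real.sqrt (a ^ (r : ℕ) * b ^ (s : ℕ)) : ℂ) *
    thetaTransform β ψ (a ^ (r : ℕ) * b ^ (s : ℕ) * x) ξ

/-- The matrix `U_m(ξ)` with `I_{q-m}` in the top-right block and
`e^{2πiξ} I_m` in the bottom-left block. -/
noncomputable def Umat (q m : ℕ) (ξ : ℝ) : Matrix (Fin q) (Fin q) ℂ :=
  fun i j =>
    if (i : ℕ) < q - m then (if (j : ℕ) = (i : ℕ) + m then 1 else 0)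
    else (if (j : ℕ) + (q - m) = (i : ℕ) then
      Complex.exp (2 * Real.pi * Complex.I * (ξ : ℂ)) else 0)

lemma theta_shift (β : ℝ) (hβ : 0 < β) (f : ℝ → ℂ) (x ξ : ℝ) (k : ℤ) :
    thetaTransform β f (β ^ k * x) ξ =
      ((Real.sqrt (β ^ k) : ℂ))⁻¹ *
        Complex.exp (2 * Real.pi * Complex.I * (k : ℂ) * (ξ : ℂ)) *
        thetaTransform β f x ξ := by
  have hs : ∀ j : ℤ, (0:ℝ) < Real.sqrt (β ^ j) := fun j => Real.sqrt_pos.2 (zpow_pos hβ j)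
  have hsc : ∀ j : ℤ, (Real.sqrt (β ^ j) : ℂ) ≠ 0 := fun j => by
    exact_mod_cast (hs j).ne'
  unfold thetaTransform
  rw [← tsum_mul_left]
  rw [← (Equiv.addRight k).tsum_eq
    (fun j : ℤ => (Real.sqrt (β ^ k) : ℂ)⁻¹ *
        Complex.exp (2 * Real.pi * Complex.I * (k : ℂ) * (ξ : ℂ)) *
        ((Real.sqrt (β ^ j) : ℂ) * f (β ^ j * x) *
          Complex.exp (-(2 * Real.pi * Complex.I * (j : ℂ) * (ξ : ℂ)))))]
  refine tsum_congr fun n => ?_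
  simp only [Equiv.coe_addRight]
  have harg : β ^ n * (β ^ k * x) = β ^ (n + k) * x := by
    rw [zpow_add₀ hβ.ne']; ring
  have hsq : Real.sqrt (β ^ (n + k)) = Real.sqrt (β ^ n) * Real.sqrt (β ^ k) := by
    rw [zpow_add₀ hβ.ne', Real.sqrt_mul (zpow_nonneg hβ.le n)]
  have hexp : Complex.exp (2 * Real.pi * Complex.I * (k : ℂ) * (ξ : ℂ)) *
      Complex.exp (-(2 * Real.pi * Complex.I * ((n + k : ℤ) : ℂ) * (ξ : ℂ))) =
      Complex.exp (-(2 * Real.pi * Complex.I * (n : ℂ) * (ξ : ℂ))) := by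
    rw [← Complex.exp_add]; congr 1; push_cast; ring
  rw [harg, hsq, ← hexp]
  push_cast
  field_simp [hsc k]

lemma sqrt_cast_ne_zero {c : ℝ} (hc : 0 < c) : (Real.sqrt c : ℂ) ≠ 0 := by
  exact_mod_cast (Real.sqrt_pos.2 hc).ne'

lemma entry_shift (a b β : ℝ) (ha0 : 0 < a) (hb0 : 0 < b) (q : ℕ) (hβa : β = a ^ q)
    (ψ : ℝ → ℂ) (x ξ : ℝ) (n n' s : ℕ) (j K : ℤ) (hrel : (n : ℤ) + j = q * K + n') :
    (Real.sqrt (a ^ n * b ^ s) : ℂ) * thetaTransform β ψ (a ^ n * b ^ s * (a ^ j * x)) ξ =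
      ((Real.sqrt (a ^ j) : ℂ))⁻¹ *
        Complex.exp (2 * Real.pi * Complex.I * (K : ℂ) * (ξ : ℂ)) *
        ((Real.sqrt (a ^ n' * b ^ s) : ℂ) * thetaTransform β ψ (a ^ n' * b ^ s * x) ξ) := by
  have hβ0 : 0 < β := by rw [hβa]; positivity
  have h1 : (a : ℝ) ^ (n : ℕ) * a ^ j = β ^ K * a ^ (n' : ℕ) := by
    rw [hβa, ← zpow_natCast a n, ← zpow_natCast a n', ← zpow_natCast a q, ← zpow_mul,
      ← zpow_add₀ ha0.ne', ← zpow_add₀ ha0.ne']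
    rw [hrel]
  have harg : a ^ n * b ^ s * (a ^ j * x) = β ^ K * (a ^ n' * b ^ s * x) := by
    calc a ^ n * b ^ s * (a ^ j * x) = (a ^ n * a ^ j) * (b ^ s * x) := by ring
      _ = (β ^ K * a ^ n') * (b ^ s * x) := by rw [h1]
      _ = β ^ K * (a ^ n' * b ^ s * x) := by ring
  have h2 : Real.sqrt (a ^ n) * Real.sqrt (a ^ j) = Real.sqrt (β ^ K) * Real.sqrt (a ^ n') := by
    rw [← Real.sqrt_mul (pow_nonneg ha0.le n), ← Real.sqrt_mul (zpow_nonneg hβ0.le K), h1]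
  have h2c : (Real.sqrt (a ^ n) : ℂ) * Real.sqrt (a ^ j) =
      (Real.sqrt (β ^ K) : ℂ) * Real.sqrt (a ^ n') := by exact_mod_cast h2
  have hsab : Real.sqrt (a ^ n * b ^ s) = Real.sqrt (a ^ n) * Real.sqrt (b ^ s) :=
    Real.sqrt_mul (pow_nonneg ha0.le n) _
  have hsab' : Real.sqrt (a ^ n' * b ^ s) = Real.sqrt (a ^ n') * Real.sqrt (b ^ s) :=
    Real.sqrt_mul (pow_nonneg ha0.le n') _
  rw [harg, theta_shift β hβ0 ψ _ ξ K, hsab, hsab']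
  push_cast
  have hj : (Real.sqrt (a ^ j) : ℂ) ≠ 0 := sqrt_cast_ne_zero (zpow_pos ha0 j)
  have hK : (Real.sqrt (β ^ K) : ℂ) ≠ 0 := sqrt_cast_ne_zero (zpow_pos hβ0 K)
  have e : (Real.sqrt (a ^ n) : ℂ) * (Real.sqrt (β ^ K) : ℂ)⁻¹ =
      (Real.sqrt (a ^ j) : ℂ)⁻¹ * Real.sqrt (a ^ n') := by
    field_simp
    linear_combination h2c
  linear_combination (Real.sqrt (b ^ s) : ℂ) *
    Complex.exp (2 * Real.pi * Complex.I * (K : ℂ) * (ξ : ℂ)) *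
    thetaTransform β ψ (a ^ n' * b ^ s * x) ξ * e

theorem stmt_13 (a b : ℝ) (ha : 1 < a) (hb : 1 < b) (p q : ℕ)
    (hp : 0 < p) (hq : 0 < q) (hco : Nat.Coprime p q)
    (hlog : Real.logb b a = (p : ℝ) / q) (β : ℝ) (hβ : β = b ^ p)
    (ψ : ℝ → ℂ) (hψ : MemLp ψ 2 (volume.restrict (Ioi (0 : ℝ))))
    (l : ℤ) (m : ℕ) (hm : m < q) :
    ∀ᵐ z ∂((volume : Measure (ℝ × ℝ)).restrict (Ioi (0 : ℝ) ×ˢ (univ : Set ℝ))),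
      psiMatrix a b β p q ψ (a ^ (l * q + m : ℤ) * z.1) z.2 =
        (((Real.sqrt (a ^ (l * q + m : ℤ)) : ℂ))⁻¹ *
            Complex.exp (2 * Real.pi * Complex.I * (l : ℂ) * (z.2 : ℂ))) •
          (Umat q m z.2 * psiMatrix a b β p q ψ z.1 z.2) := by
  have ha0 : (0:ℝ) < a := one_pos.trans ha
  have hb0 : (0:ℝ) < b := one_pos.trans hb
  have haq : a ^ q = b ^ p := by
    have hlb : Real.log b ≠ 0 := (Real.log_pos hb).ne'
    have hq0 : (q:ℝ) ≠ 0 := Nat.cast_ne_zero.2 hq.ne'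
    have hla : (q:ℝ) * Real.log a = p * Real.log b := by
      rw [Real.logb] at hlog
      field_simp at hlog
      linarith
    have hlog2 : Real.log (a ^ q) = Real.log (b ^ p) := by
      rw [Real.log_pow, Real.log_pow]; exact_mod_cast hla
    calc a ^ q = Real.exp (Real.log (a ^ q)) := (Real.exp_log (pow_pos ha0 q)).symm
      _ = Real.exp (Real.log (b ^ p)) := by rw [hlog2]
      _ = b ^ p := Real.exp_log (pow_pos hb0 p)
  have hβa : β = a ^ q := by rw [hβ, haq]
  refine Filter.Eventually.of_forall ?_
  rintro ⟨x, ξ⟩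
  ext r s
  simp only [psiMatrix, Matrix.smul_apply, Matrix.mul_apply, smul_eq_mul]
  rcases lt_or_ge ((r : ℕ) + m) q with h | h
  · -- t = 0, r' = r + m
    have hrq : (r : ℕ) < q - m := by omega
    set j₀ : Fin q := ⟨(r : ℕ) + m, by omega⟩ with hj₀
    have hsum : (∑ j : Fin q, Umat q m ξ r j *
        ((Real.sqrt (a ^ (j : ℕ) * b ^ (s : ℕ)) : ℂ) *
          thetaTransform β ψ (a ^ (j : ℕ) * b ^ (s : ℕ) * x) ξ)) =
        (Real.sqrt (a ^ ((r : ℕ) + m) * b ^ (s : ℕ)) : ℂ) *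
          thetaTransform β ψ (a ^ ((r : ℕ) + m) * b ^ (s : ℕ) * x) ξ := by
      rw [Finset.sum_eq_single j₀]
      · simp [Umat, hj₀, hrq]
      · intro j _ hj
        have : (j : ℕ) ≠ (r : ℕ) + m := by
          intro hc; exact hj (Fin.ext hc)
        simp [Umat, hrq, this]
      · simp
    rw [hsum]
    exact entry_shift a b β ha0 hb0 q hβa ψ x ξ r ((r : ℕ) + m) s (l * q + m) l
      (by push_cast; ring)
  · -- t = 1, r' = r + m - q
    have hrq : ¬ ((r : ℕ) < q - m) := by omega
    set j₀ : Fin q := ⟨(r : ℕ) + m - q, by omega⟩ with hj₀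
    have hsum : (∑ j : Fin q, Umat q m ξ r j *
        ((Real.sqrt (a ^ (j : ℕ) * b ^ (s : ℕ)) : ℂ) *
          thetaTransform β ψ (a ^ (j : ℕ) * b ^ (s : ℕ) * x) ξ)) =
        Complex.exp (2 * Real.pi * Complex.I * (ξ : ℂ)) *
          ((Real.sqrt (a ^ ((r : ℕ) + m - q) * b ^ (s : ℕ)) : ℂ) *
            thetaTransform β ψ (a ^ ((r : ℕ) + m - q) * b ^ (s : ℕ) * x) ξ) := by
      rw [Finset.sum_eq_single j₀]
      · have hv : (j₀ : ℕ) = (r : ℕ) + m - q := rfl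
        have : ((j₀ : ℕ)) + (q - m) = (r : ℕ) := by omega
        simp [Umat, hrq, this, mul_assoc]
        rw [hv]
      · intro j _ hj
        have : ¬ ((j : ℕ) + (q - m) = (r : ℕ)) := by
          intro hc
          have hv : (j₀ : ℕ) = (r : ℕ) + m - q := rfl
          exact hj (Fin.ext (by omega))
        simp [Umat, hrq, this]
      · simp
    rw [hsum]
    have key := entry_shift a b β ha0 hb0 q hβa ψ x ξ r ((r : ℕ) + m - q) s (l * q + m)
      (l + 1) (by push_cast [Nat.cast_sub h]; ring)
    rw [key]
    have hexp : Complex.exp (2 * Real.pi * Complex.I * ((l : ℂ) + 1) * (ξ : ℂ)) =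
        Complex.exp (2 * Real.pi * Complex.I * (l : ℂ) * (ξ : ℂ)) *
          Complex.exp (2 * Real.pi * Complex.I * (ξ : ℂ)) := by
      rw [← Complex.exp_add]; ring_nf
    push_cast
    rw [hexp]
    ring
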